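/- Let α be a type with decidable equality that is inhabited, let β be a linear order, and let f : α → β. Define the bag-difference fold bagDiff l₁ l₂ := l₂.foldl (fun xs x => if x ∈ xs then xs.erase x else xs) l₁ and the minimum fold minFold f l := l.foldl (fun x y => if f y < f x then y else x) l.headI. Define the selection sort orderBy f l := l.foldl (fun xs _ => xs ++ [minFold f (bagDiff l xs)]) []. Then for every l : List α, orderBy f l is a permutation of l and is sorted non-decreasingly by f, i.e., List.Sorted (fun a b => f a ≤ f b) (orderBy f l). -/

import Mathlib

/-- The paper's fold semantics for SQL's `EXCEPT ALL` (bag difference). -/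
def bagDiff {α : Type*} [DecidableEq α] (l₁ l₂ : List α) : List α :=
  l₂.foldl (fun xs x => if x ∈ xs then xs.erase x else xs) l₁

/-- The paper's `MinTuple` fold, abstracted to a single key function. -/
def minFold {α β : Type*} [Inhabited α] [LinearOrder β] (f : α → β) (l : List α) : α :=
  l.foldl (fun x y => if f y < f x then y else x) l.headI

/-- The paper's selection-sort semantics of `ORDER BY`. -/
def orderBy {α β : Type*} [DecidableEq α] [Inhabited α] [LinearOrder β]
    (f : α → β) (l : List α) : List α :=
  l.foldl (fun xs _ => xs ++ [minFold f (bagDiff l xs)]) []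

section aux

set_option linter.unusedSectionVars false

variable {α β : Type*} [DecidableEq α] [Inhabited α] [LinearOrder β]

lemma bagDiff_coe (l₂ : List α) : ∀ l₁ : List α,
    ((bagDiff l₁ l₂ : List α) : Multiset α) = (l₁ : Multiset α) - (l₂ : Multiset α) := by
  induction l₂ with
  | nil => intro l₁; simp [bagDiff]
  | cons x xs ih =>
    intro l₁
    have : bagDiff l₁ (x :: xs) = bagDiff (if x ∈ l₁ then l₁.erase x else l₁) xs := rfl
    rw [this, ih]
    have hc : ((x :: xs : List α) : Multiset α) = x ::ₘ (xs : Multiset α) := rfl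
    by_cases hx : x ∈ l₁
    · simp only [hx, if_true]
      rw [← Multiset.coe_erase, hc, Multiset.sub_cons, Multiset.coe_erase]
    · simp only [hx, if_false]
      have h1 : (l₁ : Multiset α).erase x = (l₁ : Multiset α) := by
        apply Multiset.erase_of_notMem; simpa using hx
      rw [hc, Multiset.sub_cons, h1]

lemma foldl_min_mem (f : α → β) : ∀ (l : List α) (a : α),
    l.foldl (fun x y => if f y < f x then y else x) a ∈ a :: l := by
  intro l
  induction l with
  | nil => intro a; simp
  | cons x xs ih =>
    intro a
    simp only [List.foldl_cons]
    by_cases h : f x < f a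
    · simp only [h, if_true]
      rcases List.mem_cons.mp (ih x) with h' | h' <;> simp [h']
    · simp only [h, if_false]
      rcases List.mem_cons.mp (ih a) with h' | h' <;> simp [h']

lemma foldl_min_le (f : α → β) : ∀ (l : List α) (a : α), ∀ y ∈ a :: l,
    f (l.foldl (fun x y => if f y < f x then y else x) a) ≤ f y := by
  intro l
  induction l with
  | nil =>
    intro a y hy
    simp only [List.mem_singleton] at hy
    subst hy; simp
  | cons x xs ih =>
    intro a y hy
    simp only [List.foldl_cons]
    set a' := if f x < f a then x else a with ha'
    have h1 : f a' ≤ f a := by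
      rw [ha']; split
      · exact le_of_lt ‹_›
      · exact le_rfl
    have h2 : f a' ≤ f x := by
      rw [ha']; split
      · exact le_rfl
      · exact not_lt.mp ‹_›
    rcases List.mem_cons.mp hy with rfl | hy'
    · exact le_trans (ih a' a' (by simp)) h1
    · rcases List.mem_cons.mp hy' with rfl | hy''
      · exact le_trans (ih a' a' (by simp)) h2
      · exact ih a' y (by simp [hy''])

lemma minFold_mem (f : α → β) (l : List α) (h : l ≠ []) : minFold f l ∈ l := by
  rcases List.mem_cons.mp (foldl_min_mem f l l.headI) with h' | h'
  · have : minFold f l = l.headI := h'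
    rw [this]
    obtain ⟨x, xs, rfl⟩ := List.exists_cons_of_ne_nil h
    simp
  · exact h'

lemma minFold_le (f : α → β) (l : List α) (y : α) (hy : y ∈ l) : f (minFold f l) ≤ f y :=
  foldl_min_le f l l.headI y (by simp [hy])

lemma orderBy_aux (f : α → β) (l : List α) : ∀ (t xs : List α),
    (xs : Multiset α) ≤ (l : Multiset α) →
    xs.length + t.length = l.length →
    List.Pairwise (fun a b => f a ≤ f b) xs →
    (∀ a ∈ xs, ∀ b : α, b ∈ ((l : Multiset α) - (xs : Multiset α)) → f a ≤ f b) →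
    (t.foldl (fun xs _ => xs ++ [minFold f (bagDiff l xs)]) xs).Perm l ∧
      List.Pairwise (fun a b => f a ≤ f b)
        (t.foldl (fun xs _ => xs ++ [minFold f (bagDiff l xs)]) xs) := by
  intro t
  induction t with
  | nil =>
    intro xs hle hlen hsort _
    simp only [List.length_nil] at hlen
    simp only [List.foldl_nil]
    refine ⟨?_, hsort⟩
    have hcard : Multiset.card (l : Multiset α) ≤ Multiset.card (xs : Multiset α) := by
      simp only [Multiset.coe_card]
      omega
    exact Quotient.exact (Multiset.eq_of_le_of_card_le hle hcard)
  | cons hd tl ih =>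
    intro xs hle hlen hsort hmin
    simp only [List.length_cons] at hlen
    simp only [List.foldl_cons]
    set r : Multiset α := (l : Multiset α) - (xs : Multiset α) with hr
    have hbag : ((bagDiff l xs : List α) : Multiset α) = r := bagDiff_coe xs l
    have hxslen : xs.length ≤ l.length := by omega
    have hrcard : Multiset.card r = l.length - xs.length := by
      rw [hr, Multiset.card_sub hle]; simp
    have hbagne : bagDiff l xs ≠ [] := by
      intro hemp
      rw [hemp] at hbag
      have h0 : Multiset.card r = 0 := by rw [← hbag]; rfl
      rw [hrcard] at h0
      omega
    set m := minFold f (bagDiff l xs) with hm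
    have hmmem : m ∈ r := by
      rw [← hbag, Multiset.mem_coe]
      exact minFold_mem f _ hbagne
    have hmle : ∀ b : α, b ∈ r → f m ≤ f b := by
      intro b hb
      rw [← hbag, Multiset.mem_coe] at hb
      exact minFold_le f _ b hb
    have hxs'coe : ((xs ++ [m] : List α) : Multiset α) = (xs : Multiset α) + {m} := by
      rw [← Multiset.coe_add]; rfl
    have hle' : ((xs ++ [m] : List α) : Multiset α) ≤ (l : Multiset α) := by
      rw [hxs'coe, Multiset.le_iff_count]
      intro a
      have hcnt := Multiset.le_iff_count.mp hle a
      by_cases ha : a = m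
      · subst ha
        have hpos : 0 < Multiset.count m r := Multiset.count_pos.mpr hmmem
        rw [hr, Multiset.count_sub] at hpos
        simp only [Multiset.count_add, Multiset.count_singleton, if_pos rfl, if_true]
        omega
      · simp only [Multiset.count_add, Multiset.count_singleton, if_neg ha]
        omega
    have hsub' : (l : Multiset α) - ((xs ++ [m] : List α) : Multiset α) = r.erase m := by
      rw [hxs'coe, tsub_add_eq_tsub_tsub, ← hr, Multiset.sub_singleton]
    have hsort' : List.Pairwise (fun a b => f a ≤ f b) (xs ++ [m]) := by
      rw [List.pairwise_append]
      refine ⟨hsort, by simp, ?_⟩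
      intro a ha b hb
      simp only [List.mem_singleton] at hb
      subst hb
      exact hmin a ha m hmmem
    have hmin' : ∀ a ∈ xs ++ [m], ∀ b : α,
        b ∈ ((l : Multiset α) - ((xs ++ [m] : List α) : Multiset α)) → f a ≤ f b := by
      intro a ha b hb
      rw [hsub'] at hb
      have hbr : b ∈ r := Multiset.mem_of_mem_erase hb
      rcases List.mem_append.mp ha with ha' | ha'
      · exact hmin a ha' b hbr
      · simp only [List.mem_singleton] at ha'
        subst ha'
        exact hmle b hbr
    have hlen' : (xs ++ [m]).length + tl.length = l.length := by
      simp only [List.length_append, List.length_singleton]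
      omega
    exact ih (xs ++ [m]) hle' hlen' hsort' hmin'

end aux

/-- The selection sort defining `ORDER BY` produces a permutation of the
input list that is sorted non-decreasingly by the key `f`. -/
theorem orderBy_spec {α β : Type*} [DecidableEq α] [Inhabited α] [LinearOrder β]
    (f : α → β) (l : List α) :
    (orderBy f l).Perm l ∧ List.Pairwise (fun a b => f a ≤ f b) (orderBy f l) := by
  exact orderBy_aux f l l [] (by simp) (by simp) (by simp) (by simp)
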